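/- arXiv:2311.01271 — 2 statements merged into one kernel-verified Lean document; each statement's English description precedes it below -/
import Mathlib

section
/- Let λ, Λ > 0 and let 0 < r < 1 < R be real numbers with R·(1 − λ/Λ) < 1. Assume a is hermitian, |a(u,v)| ≤ Λ·‖u‖_V·‖v‖_V for all u,v ∈ V, and Re a(v,v) − (1/2)·∑_{n∈ℕ} ‖B_n v‖_H² ≥ λ·‖v‖_V² for all v ∈ V. Then for every z in the closed strip S̄ = {z ∈ ℂ : 0 ≤ Re z ≤ 1} and every v ∈ V: Re( F(z)·(a(v,v) − Λ·‖v‖_V²) + Λ·‖v‖_V² ) − (|F(z)|/2)·∑_{n∈ℕ} ‖B_n v‖_H² ≥ Λ·(1 − R·(1 − λ/Λ))·‖v‖_V², and the constant Λ·(1 − R·(1 − λ/Λ)) is strictly positive. (The left-hand side equals Re a_z(v,v) − (1/2)‖B_z v‖² for the perturbed family a_z = Λ(F(z)(Λ⁻¹a − a₀) + a₀) with a₀(u,v) = ⟨u,v⟩_V and B_z = F(z)^{1/2} B; thus the perturbed family is coercive uniformly in z ∈ S̄.) -/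
/-- Let `λ, Λ > 0` and `0 < r < 1 < R` with `R(1 − λ/Λ) < 1`. Assume
`a` is a hermitian sesquilinear form on `V`, bounded by `Λ`, and coercive:
`Re a(v,v) − (1/2)∑ₙ‖Bₙv‖² ≥ λ‖v‖²`. With `F(z) = r·exp(z·log(R/r))`, for every `z`
in the closed strip `0 ≤ Re z ≤ 1` and every `v ∈ V`,
`Re( F(z)(a(v,v) − Λ‖v‖²) + Λ‖v‖² ) − (|F(z)|/2)·∑ₙ‖Bₙv‖² ≥ Λ(1 − R(1 − λ/Λ))‖v‖²`,
and the constant `Λ(1 − R(1 − λ/Λ))` is strictly positive. -/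
theorem perturbed_family_uniformly_coercive
    {V : Type*} [NormedAddCommGroup V] [InnerProductSpace ℂ V]
    {H : Type*} [NormedAddCommGroup H] [InnerProductSpace ℂ H]
    (a : V → V → ℂ) (B : ℕ → V →L[ℂ] H) (lam Lam r R : ℝ)
    (hlam : 0 < lam) (hLam : 0 < Lam)
    (hr0 : 0 < r) (hr1 : r < 1) (hR1 : 1 < R)
    (hRrho : R * (1 - lam / Lam) < 1)
    (F : ℂ → ℂ) (hF : ∀ z : ℂ, F z = (r : ℂ) * Complex.exp (z * (Real.log (R / r) : ℂ)))
    (hBsum : ∀ v : V, Summable fun n : ℕ => ‖B n v‖ ^ 2)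
    (ha_add₁ : ∀ u u' v : V, a (u + u') v = a u v + a u' v)
    (ha_smul₁ : ∀ (s : ℂ) (u v : V), a (s • u) v = s * a u v)
    (ha_add₂ : ∀ u v v' : V, a u (v + v') = a u v + a u v')
    (ha_smul₂ : ∀ (s : ℂ) (u v : V), a u (s • v) = starRingEnd ℂ s * a u v)
    (ha_herm : ∀ u v : V, a u v = starRingEnd ℂ (a v u))
    (hbdd : ∀ u v : V, ‖a u v‖ ≤ Lam * ‖u‖ * ‖v‖)
    (hcoer : ∀ v : V,
      lam * ‖v‖ ^ 2 ≤ (a v v).re - (1 / 2) * ∑' n : ℕ, ‖B n v‖ ^ 2) :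
    0 < Lam * (1 - R * (1 - lam / Lam)) ∧
      ∀ z : ℂ, 0 ≤ z.re → z.re ≤ 1 → ∀ v : V,
        Lam * (1 - R * (1 - lam / Lam)) * ‖v‖ ^ 2 ≤
          (F z * (a v v - ((Lam * ‖v‖ ^ 2 : ℝ) : ℂ)) + ((Lam * ‖v‖ ^ 2 : ℝ) : ℂ)).re
            - (‖F z‖ / 2) * ∑' n : ℕ, ‖B n v‖ ^ 2 := by

  constructor
  · exact mul_pos hLam (by linarith)
  intro z hx0 hx1 v
  set n2 := ‖v‖ ^ 2 with hn2
  set S := ∑' n : ℕ, ‖B n v‖ ^ 2 with hS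
  have hn2nn : 0 ≤ n2 := by positivity
  have hsum_nn : 0 ≤ S := tsum_nonneg (fun n => by positivity)
  -- a v v is real
  have haim : (a v v).im = 0 := by
    have h := ha_herm v v
    have h2 : (a v v).im = -(a v v).im := by
      conv_lhs => rw [h]
      simp
    linarith
  have havv : (a v v : ℂ) = (((a v v).re : ℝ) : ℂ) := by
    apply Complex.ext <;> simp [haim]
  -- facts about F
  have hRr : 1 < R / r := by
    rw [lt_div_iff₀ hr0]; nlinarith
  have hL : 0 ≤ Real.log (R / r) := Real.log_nonneg hRr.le
  have hFabs : ‖F z‖ = r * Real.exp (z.re * Real.log (R / r)) := by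
    rw [hF, norm_mul, Complex.norm_real, Real.norm_eq_abs, abs_of_pos hr0, Complex.norm_exp]
    congr 1
    simp [Complex.mul_re]
  have hFpos : 0 < ‖F z‖ := by rw [hFabs]; positivity
  have hFleR : ‖F z‖ ≤ R := by
    rw [hFabs]
    have h1 : Real.exp (z.re * Real.log (R / r)) ≤ Real.exp (Real.log (R / r)) :=
      Real.exp_le_exp.2 (by nlinarith)
    rw [Real.exp_log (by positivity)] at h1
    calc r * Real.exp (z.re * Real.log (R / r)) ≤ r * (R / r) := by nlinarith
      _ = R := by field_simp
  -- real part computation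
  have hre : (F z * (a v v - ((Lam * n2 : ℝ) : ℂ)) + ((Lam * n2 : ℝ) : ℂ)).re
      = (F z).re * ((a v v).re - Lam * n2) + Lam * n2 := by
    rw [havv]
    simp [Complex.add_re, Complex.mul_re, Complex.sub_re, Complex.sub_im]
  have hnorm : Lam * ‖v‖ * ‖v‖ = Lam * n2 := by rw [hn2]; ring
  have hw : (a v v).re - Lam * n2 ≤ 0 := by
    have h1 : (a v v).re ≤ ‖a v v‖ := Complex.re_le_norm _
    have h2 := hbdd v v
    linarith [hnorm ▸ h2]
  have hcv := hcoer v
  rw [← hn2, ← hS] at hcv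
  have hlamLam : (lam - Lam) * n2 ≤ 0 := by nlinarith
  have hReF : (F z).re ≤ ‖F z‖ := Complex.re_le_norm _
  have step1 : ‖F z‖ * ((a v v).re - Lam * n2)
      ≤ (F z).re * ((a v v).re - Lam * n2) :=
    mul_le_mul_of_nonpos_right hReF hw
  set X := (a v v).re - (1 / 2) * S - Lam * n2 with hX
  have hexp : (lam - Lam) * n2 = lam * n2 - Lam * n2 := by ring
  have hXlb : (lam - Lam) * n2 ≤ X := by rw [hX, hexp]; linarith
  have step2 : R * ((lam - Lam) * n2) ≤ ‖F z‖ * X := by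
    rcases le_or_gt X 0 with hX0 | hX0
    · calc R * ((lam - Lam) * n2) ≤ R * X :=
          mul_le_mul_of_nonneg_left hXlb (by linarith)
        _ ≤ ‖F z‖ * X := mul_le_mul_of_nonpos_right hFleR hX0
    · have h0 : R * ((lam - Lam) * n2) ≤ 0 :=
        mul_nonpos_of_nonneg_of_nonpos (by linarith) hlamLam
      linarith [mul_nonneg hFpos.le hX0.le]
  have hsplit : ‖F z‖ * X
      = ‖F z‖ * ((a v v).re - Lam * n2) - (‖F z‖ / 2) * S := by
    rw [hX]; ring
  have key : Lam * (1 - R * (1 - lam / Lam)) * n2 = Lam * n2 + R * ((lam - Lam) * n2) := by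
    field_simp
    ring
  rw [hre, key]
  linarith [hsplit ▸ step2]
end

section
/- Let N ≥ 1 be an integer, q > 2 a real number, and C ≥ 0. Then there exists a constant C' ≥ 0 depending only on q, C and N such that for every integer m ≥ 1, every function φ : ℝ^N → ℝ^N satisfying φ^α(y)·y^α ≤ C·(|y|² + 1) for all y ∈ ℝ^N and all α ∈ {1,…,N}, and every v ∈ ℝ^N, one has ∑_{α=1}^N ψ_m'(v^α)·φ^α(v) ≤ C'·(1 + ∑_{β=1}^N ψ_m(v^β)). -/
/-- The auxiliary function `ψ_m` from Lemma `lem:p-approx`: `ψ_m(ξ) = |ξ|^q` for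
`|ξ| ≤ m`, and the quadratic extension
`m^{q-2} (q(q-1)/2·ξ² − q(q-2)·m·|ξ| + (q-1)(q-2)/2·m²)` for `|ξ| > m`. -/
noncomputable def psiAux (q : ℝ) (m : ℕ) (ξ : ℝ) : ℝ :=
  if |ξ| ≤ (m : ℝ) then |ξ| ^ q
  else (m : ℝ) ^ (q - 2) *
    (q * (q - 1) / 2 * ξ ^ 2 - q * (q - 2) * (m : ℝ) * |ξ|
      + (q - 1) * (q - 2) / 2 * (m : ℝ) ^ 2)


noncomputable def auxG (q : ℝ) (m : ℕ) (ξ : ℝ) : ℝ :=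
  if |ξ| ≤ (m : ℝ) then q * |ξ| ^ (q - 2)
  else (m : ℝ) ^ (q - 2) * (q * (q - 1) - q * (q - 2) * (m : ℝ) / |ξ|)

noncomputable def quadPart (q : ℝ) (m : ℕ) (x : ℝ) : ℝ :=
  (m : ℝ) ^ (q - 2) *
    (q * (q - 1) / 2 * x ^ 2 - q * (q - 2) * (m : ℝ) * x
      + (q - 1) * (q - 2) / 2 * (m : ℝ) ^ 2)

lemma hasDerivAt_quadPart (q : ℝ) (m : ℕ) (x : ℝ) :
    HasDerivAt (quadPart q m)
      ((m : ℝ) ^ (q - 2) * (q * (q - 1) * x - q * (q - 2) * m)) x := by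
  have h1 : HasDerivAt
      (fun x : ℝ => q * (q - 1) / 2 * x ^ 2 - q * (q - 2) * (m:ℝ) * x
        + (q - 1) * (q - 2) / 2 * (m:ℝ) ^ 2)
      (q * (q - 1) * x - q * (q - 2) * m) x := by
    have := (((hasDerivAt_pow 2 x).const_mul (q * (q - 1) / 2)).sub
      ((hasDerivAt_id x).const_mul (q * (q - 2) * (m:ℝ)))).add_const
      ((q - 1) * (q - 2) / 2 * (m:ℝ) ^ 2)
    refine this.congr_deriv ?_
    norm_num
    ring
  exact h1.const_mul _

lemma rpow_sub_two_mul_sq {x q : ℝ} (hx : 0 ≤ x) (hq : q ≠ 0) :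
    x ^ (q - 2) * x ^ 2 = x ^ q := by
  rw [← Real.rpow_natCast x 2, ← Real.rpow_add' hx (by push_cast; simpa using hq)]
  norm_num

lemma quadPart_at_m {q : ℝ} {m : ℕ} (hq : 2 < q) (hm : 1 ≤ m) :
    quadPart q m m = (m : ℝ) ^ q := by
  have hm0 : (0:ℝ) < m := by exact_mod_cast Nat.pos_of_ne_zero (by omega)
  have h : quadPart q m m = (m:ℝ) ^ (q - 2) * (m:ℝ) ^ 2 := by
    unfold quadPart; ring
  rw [h, rpow_sub_two_mul_sq hm0.le (by linarith)]

lemma psiAux_even (q : ℝ) (m : ℕ) (x : ℝ) : psiAux q m (-x) = psiAux q m x := by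
  simp [psiAux]

lemma auxG_even (q : ℝ) (m : ℕ) (x : ℝ) : auxG q m (-x) = auxG q m x := by
  simp [auxG]

lemma hasDerivAt_psiAux {q : ℝ} (hq : 2 < q) {m : ℕ} (hm : 1 ≤ m) (ξ : ℝ) :
    HasDerivAt (psiAux q m) (auxG q m ξ * ξ) ξ := by
  have hm1 : (1:ℝ) ≤ m := by exact_mod_cast hm
  have hm0 : (0:ℝ) < m := by linarith
  have hq1 : (1:ℝ) < q := by linarith
  -- main claim for nonnegative points
  have main : ∀ x : ℝ, 0 ≤ x → HasDerivAt (psiAux q m) (auxG q m x * x) x := by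
    intro x hx
    rcases lt_trichotomy x m with hlt | heq | hgt
    · -- x < m : locally |·|^q
      have hmem : x ∈ Set.Ioo (-(m:ℝ)) (m:ℝ) := ⟨by linarith, hlt⟩
      have habs : |x| ≤ (m:ℝ) := by
        rw [abs_of_nonneg hx]; exact hlt.le
      have hG : auxG q m x * x = q * |x| ^ (q - 2) * x := by
        rw [auxG, if_pos habs]
      rw [hG]
      refine (hasDerivAt_abs_rpow x hq1).congr_of_eventuallyEq ?_
      filter_upwards [Ioo_mem_nhds hmem.1 hmem.2] with y hy
      have : |y| ≤ (m:ℝ) := abs_le.2 ⟨hy.1.le, hy.2.le⟩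
      simp [psiAux, this]
    · -- x = m : glue
      subst heq
      have habs : |(m:ℝ)| ≤ (m:ℝ) := by rw [abs_of_nonneg hm0.le]
      have hG : auxG q m m * m = q * (m:ℝ) ^ (q - 2) * m := by
        rw [auxG, if_pos habs, abs_of_nonneg hm0.le]
      rw [hG]
      have hleft : HasDerivWithinAt (psiAux q m) (q * (m:ℝ) ^ (q - 2) * m)
          (Set.Iic (m:ℝ)) (m:ℝ) := by
        have h0 := (hasDerivAt_abs_rpow (m:ℝ) hq1).hasDerivWithinAt
          (s := Set.Iic (m:ℝ))
        rw [abs_of_nonneg hm0.le] at h0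
        refine h0.congr_of_eventuallyEq ?_ ?_
        · filter_upwards [nhdsWithin_le_nhds
            (Ioi_mem_nhds (show -(m:ℝ) < m by linarith)),
            self_mem_nhdsWithin] with y hy1 (hy2 : y ≤ (m:ℝ))
          have : |y| ≤ (m:ℝ) := abs_le.2 ⟨le_of_lt hy1, hy2⟩
          simp [psiAux, this]
        · simp [psiAux, habs]
      have hright : HasDerivWithinAt (psiAux q m) (q * (m:ℝ) ^ (q - 2) * m)
          (Set.Ici (m:ℝ)) (m:ℝ) := by
        have h0 := (hasDerivAt_quadPart q m (m:ℝ)).hasDerivWithinAt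
          (s := Set.Ici (m:ℝ))
        have e : (m : ℝ) ^ (q - 2) * (q * (q - 1) * m - q * (q - 2) * m)
            = q * (m:ℝ) ^ (q - 2) * m := by ring
        rw [e] at h0
        refine h0.congr_of_eventuallyEq ?_ ?_
        · filter_upwards [self_mem_nhdsWithin] with y (hy : (m:ℝ) ≤ y)
          have hy0 : 0 ≤ y := le_trans hm0.le hy
          rcases eq_or_lt_of_le hy with h | h
          · rw [← h]
            simp [psiAux, habs, quadPart_at_m hq hm]
          · simp only [psiAux, quadPart, abs_of_nonneg hy0, if_neg (not_le.2 h)]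
        · simp [psiAux, habs, quadPart_at_m hq hm, abs_of_nonneg hm0.le]
      have := hleft.union hright
      rw [Set.Iic_union_Ici] at this
      exact this.hasDerivAt (by simp)
    · -- x > m : locally quadPart
      have hx0 : 0 < x := lt_trans hm0 hgt
      have habs : ¬ |x| ≤ (m:ℝ) := by
        rw [abs_of_nonneg hx0.le]; exact not_le.2 hgt
      have hG : auxG q m x * x
          = (m : ℝ) ^ (q - 2) * (q * (q - 1) * x - q * (q - 2) * m) := by
        rw [auxG, if_neg habs, abs_of_nonneg hx0.le]
        field_simp
      rw [hG]
      refine (hasDerivAt_quadPart q m x).congr_of_eventuallyEq ?_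
      filter_upwards [Ioi_mem_nhds hgt] with y (hy : (m:ℝ) < y)
      have hy0 : 0 ≤ y := le_trans hm0.le hy.le
      simp only [psiAux, quadPart, abs_of_nonneg hy0, if_neg (not_le.2 hy)]
  rcases le_or_gt 0 ξ with h | h
  · exact main ξ h
  · have h1 := main (-ξ) (by linarith)
    have h2 := h1.comp ξ (hasDerivAt_neg ξ)
    have e1 : psiAux q m ∘ Neg.neg = psiAux q m := by
      funext y; simp [Function.comp, psiAux_even]
    have e2 : auxG q m (-ξ) * -ξ * -1 = auxG q m ξ * ξ := by
      rw [auxG_even]; ring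
    rw [e1, e2] at h2
    exact h2

lemma rpow_sub_two_mul_sq' {x q : ℝ} (hx : 0 ≤ x) (hq : q ≠ 0) :
    x ^ (q - 2) * x ^ 2 = x ^ q := by
  rw [← Real.rpow_natCast x 2, ← Real.rpow_add' hx (by push_cast; simpa using hq)]
  norm_num

section ineq
variable {q : ℝ} {m : ℕ} (hq : 2 < q) (hm : 1 ≤ m)
include hq hm

lemma psiAux_lower {ξ : ℝ} (h : (m:ℝ) < |ξ|) :
    (m:ℝ) ^ (q - 2) * ξ ^ 2 ≤ psiAux q m ξ := by
  have hm1 : (1:ℝ) ≤ m := by exact_mod_cast hm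
  rw [psiAux, if_neg (not_le.2 h)]
  have hr : (0:ℝ) ≤ (m:ℝ) ^ (q - 2) := Real.rpow_nonneg (by linarith) _
  have key : ξ ^ 2 ≤ q * (q - 1) / 2 * ξ ^ 2 - q * (q - 2) * m * |ξ|
      + (q - 1) * (q - 2) / 2 * (m:ℝ) ^ 2 := by
    have h1 : 0 ≤ |ξ| - m := by linarith
    have ha : (0:ℝ) ≤ q ^ 2 - q - 2 := by nlinarith
    have hb' : (q ^ 2 - q - 2) * (m:ℝ) ≤ (q ^ 2 - q - 2) * |ξ| :=
      mul_le_mul_of_nonneg_left h.le ha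
    have h2 : 0 ≤ (q ^ 2 - q - 2) * |ξ| - (q - 1) * (q - 2) * m := by
      nlinarith [mul_nonneg (show (0:ℝ) ≤ 2 * q - 4 by linarith)
        (show (0:ℝ) ≤ (m:ℝ) by linarith)]
    have hsq : ξ ^ 2 = |ξ| ^ 2 := (sq_abs ξ).symm
    nlinarith [mul_nonneg h1 h2]
  exact mul_le_mul_of_nonneg_left key hr

lemma psiAux_nonneg (ξ : ℝ) : 0 ≤ psiAux q m ξ := by
  by_cases h : |ξ| ≤ (m:ℝ)
  · rw [psiAux, if_pos h]; exact Real.rpow_nonneg (abs_nonneg ξ) q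
  · refine le_trans ?_ (psiAux_lower hq hm (not_le.1 h))
    positivity

lemma psiAux_ge_m_rpow {ξ : ℝ} (h : (m:ℝ) < |ξ|) : (m:ℝ) ^ q ≤ psiAux q m ξ := by
  have hm1 : (1:ℝ) ≤ m := by exact_mod_cast hm
  refine le_trans ?_ (psiAux_lower hq hm h)
  have : (m:ℝ) ^ q = (m:ℝ) ^ (q - 2) * (m:ℝ) ^ 2 :=
    (rpow_sub_two_mul_sq' (by linarith) (by linarith)).symm
  rw [this]
  have h2 : (m:ℝ) ^ 2 ≤ ξ ^ 2 := by
    rw [← sq_abs ξ]; exact pow_le_pow_left₀ (by linarith) h.le 2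
  exact mul_le_mul_of_nonneg_left h2 (Real.rpow_nonneg (by linarith) _)

lemma auxG_nonneg (ξ : ℝ) : 0 ≤ auxG q m ξ := by
  have hm1 : (1:ℝ) ≤ m := by exact_mod_cast hm
  by_cases h : |ξ| ≤ (m:ℝ)
  · rw [auxG, if_pos h]
    exact mul_nonneg (by linarith) (Real.rpow_nonneg (abs_nonneg ξ) _)
  · rw [auxG, if_neg h]
    push_neg at h
    have hξ0 : (0:ℝ) < |ξ| := by linarith
    have hdiv : (m:ℝ) / |ξ| ≤ 1 := (div_le_one hξ0).2 h.le
    have h2 : q * (q - 2) * ((m:ℝ) / |ξ|) ≤ q * (q - 2) :=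
      mul_le_of_le_one_right (by nlinarith) hdiv
    have : 0 ≤ q * (q - 1) - q * (q - 2) * (m:ℝ) / |ξ| := by
      rw [mul_div_assoc]; nlinarith [h2]
    exact mul_nonneg (Real.rpow_nonneg (by linarith) _) this

lemma auxG_le_branch2 {ξ : ℝ} (h : ¬ |ξ| ≤ (m:ℝ)) :
    auxG q m ξ ≤ q * (q - 1) * (m:ℝ) ^ (q - 2) := by
  have hm1 : (1:ℝ) ≤ m := by exact_mod_cast hm
  rw [auxG, if_neg h]
  push_neg at h
  have hξ0 : (0:ℝ) < |ξ| := by linarith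
  have hr : (0:ℝ) ≤ (m:ℝ) ^ (q - 2) := Real.rpow_nonneg (by linarith) _
  have : q * (q - 1) - q * (q - 2) * (m:ℝ) / |ξ| ≤ q * (q - 1) := by
    have h0 : (0:ℝ) ≤ q * (q - 2) * (m:ℝ) :=
      mul_nonneg (mul_nonneg (by linarith) (by linarith)) (by linarith)
    have : 0 ≤ q * (q - 2) * (m:ℝ) / |ξ| := div_nonneg h0 hξ0.le
    linarith
  nlinarith [mul_le_mul_of_nonneg_left this hr]

lemma auxG_mul_sq_le (ξ η : ℝ) :
    auxG q m ξ * η ^ 2 ≤ q * (q - 1) * (psiAux q m ξ + psiAux q m η) := by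
  have hm1 : (1:ℝ) ≤ m := by exact_mod_cast hm
  have hψξ := psiAux_nonneg hq hm ξ
  have hψη := psiAux_nonneg hq hm η
  have hq0 : (0:ℝ) ≤ q := by linarith
  have hq1' : (0:ℝ) ≤ q - 1 := by linarith
  have hq2' : (0:ℝ) ≤ q - 2 := by linarith
  have hqq1 : (0:ℝ) ≤ q * (q - 1) := mul_nonneg hq0 hq1'
  by_cases hξ : |ξ| ≤ (m:ℝ)
  · rw [auxG, if_pos hξ]
    by_cases hη : |η| ≤ |ξ|
    · -- bound by q ψ(ξ)
      have h1 : q * |ξ| ^ (q - 2) * η ^ 2 ≤ q * |ξ| ^ (q - 2) * ξ ^ 2 := by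
        have h2 : η ^ 2 ≤ ξ ^ 2 := by
          rw [← sq_abs ξ, ← sq_abs η]; exact pow_le_pow_left₀ (abs_nonneg η) hη 2
        have : (0:ℝ) ≤ q * |ξ| ^ (q - 2) :=
          mul_nonneg (by linarith) (Real.rpow_nonneg (abs_nonneg ξ) _)
        exact mul_le_mul_of_nonneg_left h2 this
      have h2 : q * |ξ| ^ (q - 2) * ξ ^ 2 = q * psiAux q m ξ := by
        rw [psiAux, if_pos hξ, mul_assoc, ← sq_abs ξ,
          rpow_sub_two_mul_sq' (abs_nonneg ξ) (by linarith)]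
      nlinarith [mul_nonneg (mul_nonneg hq0 hq2') hψξ,
        mul_nonneg (mul_nonneg hq0 hq1') hψη]
    · push_neg at hη
      by_cases hη2 : |η| ≤ (m:ℝ)
      · -- bound by q ψ(η)
        have h1 : q * |ξ| ^ (q - 2) * η ^ 2 ≤ q * |η| ^ (q - 2) * η ^ 2 := by
          have h' : |ξ| ^ (q - 2) ≤ |η| ^ (q - 2) :=
            Real.rpow_le_rpow (abs_nonneg ξ) hη.le (by linarith)
          calc q * |ξ| ^ (q - 2) * η ^ 2 = q * η ^ 2 * |ξ| ^ (q - 2) := by ring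
            _ ≤ q * η ^ 2 * |η| ^ (q - 2) :=
              mul_le_mul_of_nonneg_left h' (mul_nonneg hq0 (sq_nonneg η))
            _ = q * |η| ^ (q - 2) * η ^ 2 := by ring
        have h2 : q * |η| ^ (q - 2) * η ^ 2 = q * psiAux q m η := by
          rw [psiAux, if_pos hη2, mul_assoc, ← sq_abs η,
            rpow_sub_two_mul_sq' (abs_nonneg η) (by linarith)]
        nlinarith [mul_nonneg (mul_nonneg hq0 hq2') hψη,
          mul_nonneg (mul_nonneg hq0 hq1') hψξ]
      · -- |η| > m : ψ(η) ≥ m^{q-2} η²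
        push_neg at hη2
        have h1 : q * |ξ| ^ (q - 2) * η ^ 2 ≤ q * ((m:ℝ) ^ (q - 2) * η ^ 2) := by
          have h' : |ξ| ^ (q - 2) ≤ (m:ℝ) ^ (q - 2) :=
            Real.rpow_le_rpow (abs_nonneg ξ) hξ (by linarith)
          calc q * |ξ| ^ (q - 2) * η ^ 2 = q * η ^ 2 * |ξ| ^ (q - 2) := by ring
            _ ≤ q * η ^ 2 * (m:ℝ) ^ (q - 2) :=
              mul_le_mul_of_nonneg_left h' (mul_nonneg hq0 (sq_nonneg η))
            _ = q * ((m:ℝ) ^ (q - 2) * η ^ 2) := by ring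
        have h2 := psiAux_lower hq hm hη2
        have h3 := mul_le_mul_of_nonneg_left h2 hq0
        nlinarith [mul_nonneg (mul_nonneg hq0 hq2') hψη,
          mul_nonneg (mul_nonneg hq0 hq1') hψξ]
  · -- |ξ| > m
    have hb := auxG_le_branch2 hq hm hξ
    push_neg at hξ
    have hG0 := auxG_nonneg hq hm ξ
    have h1 : auxG q m ξ * η ^ 2 ≤ q * (q - 1) * ((m:ℝ) ^ (q - 2) * η ^ 2) := by
      calc auxG q m ξ * η ^ 2 ≤ q * (q - 1) * (m:ℝ) ^ (q - 2) * η ^ 2 :=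
            mul_le_mul_of_nonneg_right hb (sq_nonneg η)
        _ = q * (q - 1) * ((m:ℝ) ^ (q - 2) * η ^ 2) := by ring
    by_cases hη : |η| ≤ (m:ℝ)
    · have h2 : (m:ℝ) ^ (q - 2) * η ^ 2 ≤ (m:ℝ) ^ (q - 2) * ξ ^ 2 := by
        have : η ^ 2 ≤ ξ ^ 2 := by
          rw [← sq_abs ξ, ← sq_abs η]
          exact pow_le_pow_left₀ (abs_nonneg η) (le_trans hη hξ.le) 2
        exact mul_le_mul_of_nonneg_left this (Real.rpow_nonneg (by linarith) _)
      have h3 := psiAux_lower hq hm hξ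
      have h4 := mul_le_mul_of_nonneg_left (h2.trans h3) hqq1
      nlinarith [mul_nonneg hqq1 hψη]
    · push_neg at hη
      have h2 := psiAux_lower hq hm hη
      have h4 := mul_le_mul_of_nonneg_left h2 hqq1
      nlinarith [mul_nonneg hqq1 hψξ]

lemma auxG_le (ξ : ℝ) : auxG q m ξ ≤ q * (q - 1) * (1 + psiAux q m ξ) := by
  have hm1 : (1:ℝ) ≤ m := by exact_mod_cast hm
  have hψ := psiAux_nonneg hq hm ξ
  have hq0 : (0:ℝ) ≤ q := by linarith
  have hq1' : (0:ℝ) ≤ q - 1 := by linarith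
  have hq2' : (0:ℝ) ≤ q - 2 := by linarith
  have hqq1 : (0:ℝ) ≤ q * (q - 1) := mul_nonneg hq0 hq1'
  by_cases hξ : |ξ| ≤ (m:ℝ)
  · rw [auxG, if_pos hξ]
    by_cases h1 : |ξ| ≤ 1
    · have : |ξ| ^ (q - 2) ≤ 1 :=
        Real.rpow_le_one (abs_nonneg ξ) h1 (by linarith)
      nlinarith
    · push_neg at h1
      have h2 : |ξ| ^ (q - 2) ≤ |ξ| ^ q :=
        Real.rpow_le_rpow_of_exponent_le h1.le (by linarith)
      have h3 : psiAux q m ξ = |ξ| ^ q := by rw [psiAux, if_pos hξ]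
      have := mul_le_mul_of_nonneg_left h2 hq0
      nlinarith [mul_nonneg hq0 hq1',
        mul_nonneg (mul_nonneg hq0 hq2') hψ]
  · have hb := auxG_le_branch2 hq hm hξ
    push_neg at hξ
    have h1 : (m:ℝ) ^ (q - 2) ≤ (m:ℝ) ^ q :=
      Real.rpow_le_rpow_of_exponent_le hm1 (by linarith)
    have h2 := psiAux_ge_m_rpow hq hm hξ
    have h4 := mul_le_mul_of_nonneg_left (h1.trans h2) hqq1
    nlinarith

end ineq

/-- Let `N ≥ 1`, `q > 2`, `C ≥ 0`. There is a constant `C' ≥ 0`,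
depending only on `q`, `C` and `N`, such that for every `m ≥ 1`, every
`φ : ℝ^N → ℝ^N` satisfying the dissipativity condition
`φ^α(y)·y^α ≤ C(|y|² + 1)` for all `y` and `α`, and every `v ∈ ℝ^N`, one has
`∑_α ψ_m'(v^α)·φ^α(v) ≤ C'·(1 + ∑_β ψ_m(v^β))`. -/
theorem psiAux_dissipativity_bound (N : ℕ) (hN : 1 ≤ N) (q C : ℝ)
    (hq : 2 < q) (hC : 0 ≤ C) :
    ∃ C' : ℝ, 0 ≤ C' ∧
      ∀ (m : ℕ), 1 ≤ m →
        ∀ φ : EuclideanSpace ℝ (Fin N) → EuclideanSpace ℝ (Fin N),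
          (∀ (y : EuclideanSpace ℝ (Fin N)) (α : Fin N),
            φ y α * y α ≤ C * (‖y‖ ^ 2 + 1)) →
          ∀ v : EuclideanSpace ℝ (Fin N),
            ∑ α : Fin N, deriv (psiAux q m) (v α) * φ v α
              ≤ C' * (1 + ∑ β : Fin N, psiAux q m (v β)) := by
  have hq0 : (0:ℝ) ≤ q := by linarith
  have hq1' : (0:ℝ) ≤ q - 1 := by linarith
  have hK : (0:ℝ) ≤ C * (q * (q - 1)) :=
    mul_nonneg hC (mul_nonneg hq0 hq1')
  have hN0 : (0:ℝ) ≤ (N:ℝ) := Nat.cast_nonneg N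
  refine ⟨C * (q * (q - 1)) * (2 * N + 1), by positivity, ?_⟩
  intro m hm φ hφ v
  set S := ∑ β : Fin N, psiAux q m (v β) with hSdef
  have hS : 0 ≤ S :=
    Finset.sum_nonneg fun β _ => psiAux_nonneg hq hm (v β)
  have hnorm : ‖v‖ ^ 2 = ∑ β : Fin N, (v β) ^ 2 := by
    rw [EuclideanSpace.norm_eq, Real.sq_sqrt (by positivity)]
    simp [Real.norm_eq_abs, sq_abs]
  have hbound : ∀ α : Fin N,
      deriv (psiAux q m) (v α) * φ v α ≤
        C * (q * (q - 1)) * ((N:ℝ) + 1) * psiAux q m (v α)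
          + C * (q * (q - 1)) * (S + 1) := by
    intro α
    have hd : deriv (psiAux q m) (v α) = auxG q m (v α) * v α :=
      (hasDerivAt_psiAux hq hm (v α)).deriv
    have hG0 := auxG_nonneg hq hm (v α)
    have step1 : deriv (psiAux q m) (v α) * φ v α
        ≤ auxG q m (v α) * (C * (‖v‖ ^ 2 + 1)) := by
      rw [hd]
      calc auxG q m (v α) * v α * φ v α
          = auxG q m (v α) * (φ v α * v α) := by ring
        _ ≤ auxG q m (v α) * (C * (‖v‖ ^ 2 + 1)) :=
            mul_le_mul_of_nonneg_left (hφ v α) hG0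
    have step2 : auxG q m (v α) * (C * (‖v‖ ^ 2 + 1))
        = C * ((∑ β : Fin N, auxG q m (v α) * (v β) ^ 2) + auxG q m (v α)) := by
      rw [hnorm, ← Finset.mul_sum]; ring
    have step3 : (∑ β : Fin N, auxG q m (v α) * (v β) ^ 2)
        ≤ q * (q - 1) * ((N:ℝ) * psiAux q m (v α) + S) := by
      calc (∑ β : Fin N, auxG q m (v α) * (v β) ^ 2)
          ≤ ∑ β : Fin N, q * (q - 1) * (psiAux q m (v α) + psiAux q m (v β)) :=
            Finset.sum_le_sum fun β _ => auxG_mul_sq_le hq hm (v α) (v β)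
        _ = q * (q - 1) * ((N:ℝ) * psiAux q m (v α) + S) := by
            simp only [mul_add, Finset.sum_add_distrib, Finset.sum_const,
              Finset.card_univ, Fintype.card_fin, nsmul_eq_mul, ← Finset.mul_sum,
              hSdef]
            ring
    have step4 := auxG_le hq hm (v α)
    calc deriv (psiAux q m) (v α) * φ v α
        ≤ C * ((∑ β : Fin N, auxG q m (v α) * (v β) ^ 2) + auxG q m (v α)) := by
          rw [← step2]; exact step1
      _ ≤ C * (q * (q - 1) * ((N:ℝ) * psiAux q m (v α) + S)
            + q * (q - 1) * (1 + psiAux q m (v α))) :=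
          mul_le_mul_of_nonneg_left (add_le_add step3 step4) hC
      _ = C * (q * (q - 1)) * ((N:ℝ) + 1) * psiAux q m (v α)
            + C * (q * (q - 1)) * (S + 1) := by ring
  calc ∑ α : Fin N, deriv (psiAux q m) (v α) * φ v α
      ≤ ∑ α : Fin N, (C * (q * (q - 1)) * ((N:ℝ) + 1) * psiAux q m (v α)
          + C * (q * (q - 1)) * (S + 1)) :=
        Finset.sum_le_sum fun α _ => hbound α
    _ = C * (q * (q - 1)) * ((N:ℝ) + 1) * S
          + (N:ℝ) * (C * (q * (q - 1)) * (S + 1)) := by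
        simp only [Finset.sum_add_distrib, Finset.sum_const, Finset.card_univ,
          Fintype.card_fin, nsmul_eq_mul, ← Finset.mul_sum, hSdef]
    _ ≤ C * (q * (q - 1)) * (2 * N + 1) * (1 + S) := by
        nlinarith [mul_nonneg hK hN0, mul_nonneg (mul_nonneg hK hN0) hS,
          mul_nonneg hK hS]
end
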